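/- arXiv:1805.04211 — 6 statements merged into one kernel-verified Lean document; each statement's English description precedes it below -/
import Mathlib

section
/- Let λ₁, λ₂ ∈ ℝ be nonzero with λ₁ ≠ λ₂, and define r(λ₁,λ₂) = λ₁²λ₂²(λ₂−λ₁)² / (|λ₁(λ₁−1)| + |λ₂(λ₂−1)|)². Then for all γ ∈ [0,1], the quantity λ₁²λ₂²(λ₂−λ₁)² · (1−γ)γ / ((1−γ)λ₁²(λ₁−1)² + γλ₂²(λ₂−1)²) is bounded in absolute value by r(λ₁,λ₂), provided λ₁ ≠ 1 and λ₂ ≠ 1. -/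
/-- Key maximization step in the worst-case analysis of restarted Anderson
acceleration AA*(1). -/
theorem aa_eigenvalue_bound (l1 l2 : ℝ) (h1 : l1 ≠ 0) (h2 : l2 ≠ 0)
    (hne : l1 ≠ l2) (h1' : l1 ≠ 1) (h2' : l2 ≠ 1)
    (γ : ℝ) (hγ : γ ∈ Set.Icc (0:ℝ) 1) :
    |l1^2 * l2^2 * (l2 - l1)^2 * ((1 - γ) * γ) /
      ((1 - γ) * l1^2 * (l1 - 1)^2 + γ * l2^2 * (l2 - 1)^2)| ≤
    l1^2 * l2^2 * (l2 - l1)^2 / (|l1 * (l1 - 1)| + |l2 * (l2 - 1)|)^2 := by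
  obtain ⟨hγ0, hγ1⟩ := hγ
  set a := |l1 * (l1 - 1)| with ha
  set b := |l2 * (l2 - 1)| with hb
  have ha0 : 0 < a := abs_pos.mpr (mul_ne_zero h1 (sub_ne_zero.mpr h1'))
  have hb0 : 0 < b := abs_pos.mpr (mul_ne_zero h2 (sub_ne_zero.mpr h2'))
  have haa : l1^2 * (l1 - 1)^2 = a^2 := by rw [ha, sq_abs]; ring
  have hbb : l2^2 * (l2 - 1)^2 = b^2 := by rw [hb, sq_abs]; ring
  have hC : (0:ℝ) ≤ l1^2 * l2^2 * (l2 - l1)^2 := by positivity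
  set C := l1^2 * l2^2 * (l2 - l1)^2 with hCdef
  have hD : (0:ℝ) < (1 - γ) * l1^2 * (l1 - 1)^2 + γ * l2^2 * (l2 - 1)^2 := by
    have h1a : (1 - γ) * l1^2 * (l1 - 1)^2 = (1 - γ) * a^2 := by
      rw [mul_assoc, haa]
    have h2b : γ * l2^2 * (l2 - 1)^2 = γ * b^2 := by rw [mul_assoc, hbb]
    rw [h1a, h2b]
    rcases eq_or_lt_of_le hγ0 with h | h
    · have : γ = 0 := h.symm
      subst this; simpa using mul_pos one_pos (pow_pos ha0 2)
    rcases eq_or_lt_of_le hγ1 with h' | h'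
    · subst h'; simpa using pow_pos hb0 2
    · have : 0 < 1 - γ := by linarith
      positivity
  set D := (1 - γ) * l1^2 * (l1 - 1)^2 + γ * l2^2 * (l2 - 1)^2 with hDdef
  have hnum : 0 ≤ C * ((1 - γ) * γ) := by
    apply mul_nonneg hC
    apply mul_nonneg <;> linarith
  rw [abs_div, abs_of_nonneg hnum, abs_of_pos hD]
  rw [div_le_div_iff₀ hD (by positivity)]
  have key : (1 - γ) * γ * (a + b)^2 ≤ D := by
    have expand : D - (1 - γ) * γ * (a + b)^2 = ((1 - γ) * a - γ * b)^2 := by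
      rw [hDdef, mul_assoc, haa, mul_assoc, hbb]
      ring
    nlinarith [sq_nonneg ((1 - γ) * a - γ * b)]
  calc C * ((1 - γ) * γ) * (a + b)^2 = C * ((1 - γ) * γ * (a + b)^2) := by ring
    _ ≤ C * D := by exact mul_le_mul_of_nonneg_left key hC
end

section
/- Let λ₁ > 1 and λ₂ ∈ (0,1). Then r(λ₁,λ₂) := λ₁²λ₂²(λ₂−λ₁)² / (λ₁(λ₁−1) + λ₂(1−λ₂))² < 1. Consequently, restarted Anderson acceleration AA*(1) converges even though the underlying Richardson iteration with eigenvalue λ₁ > 1 is non-contractive in that eigendirection. -/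
/-- AA*(1) converges even for a non-contractive Richardson iteration with one
eigenvalue larger than one. -/
theorem aa_converges_noncontractive (l1 l2 : ℝ) (h1 : 1 < l1)
    (h2l : 0 < l2) (h2u : l2 < 1) :
    l1^2 * l2^2 * (l2 - l1)^2 / (l1 * (l1 - 1) + l2 * (1 - l2))^2 < 1 := by
  have hD : 0 < l1 * (l1 - 1) + l2 * (1 - l2) := by nlinarith
  rw [div_lt_one (by positivity)]
  have hN : 0 ≤ l1 * l2 * (l1 - l2) := le_of_lt (mul_pos (mul_pos (lt_trans one_pos h1) h2l) (sub_pos.2 (h2u.trans h1)))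
  have key : l1 * l2 * (l1 - l2) < l1 * (l1 - 1) + l2 * (1 - l2) := by
    nlinarith [mul_pos (mul_pos (sub_pos.2 h2u) (sub_pos.2 h1)) (sub_pos.2 (h2u.trans h1))]
  have := mul_lt_mul' key.le key hN hD
  nlinarith [this]
end

section
/- Fix λ₂ ∈ (0,1). The function λ₁ ↦ r(λ₁,λ₂) = λ₁²λ₂²(λ₂−λ₁)² / (λ₁(λ₁−1) + λ₂(1−λ₂))² satisfies r(1,λ₂) = 1 and is strictly decreasing in λ₁ on (1,∞). -/
/-- For fixed λ₂ ∈ (0,1), r(·,λ₂) equals 1 at λ₁ = 1 and is strictly decreasing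
on (1,∞). -/
theorem aa_rate_strict_anti (l2 : ℝ) (h2l : 0 < l2) (h2u : l2 < 1) :
    (fun l1 : ℝ => l1^2 * l2^2 * (l2 - l1)^2 /
        (l1 * (l1 - 1) + l2 * (1 - l2))^2) 1 = 1 ∧
    StrictAntiOn (fun l1 : ℝ => l1^2 * l2^2 * (l2 - l1)^2 /
        (l1 * (l1 - 1) + l2 * (1 - l2))^2) (Set.Ioi 1) := by
  constructor
  · have hne : l2 * (1 - l2) ≠ 0 := ne_of_gt (mul_pos h2l (by linarith))
    field_simp
    rw [sub_self, zero_add, div_eq_one_iff_eq (pow_ne_zero 2 hne)]; ring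
  · intro a ha b hb hab
    simp only [Set.mem_Ioi] at ha hb
    have hDa : 0 < a * (a - 1) + l2 * (1 - l2) := by nlinarith
    have hDb : 0 < b * (b - 1) + l2 * (1 - l2) := by nlinarith
    simp only
    rw [div_lt_div_iff₀ (by positivity) (by positivity)]
    have hNa : 0 < a * l2 * (a - l2) := mul_pos (mul_pos (by linarith) h2l) (by linarith)
    have hNb : 0 < b * l2 * (b - l2) := mul_pos (mul_pos (by linarith) h2l) (by linarith)
    have h1 : 0 < b * l2 * (b - l2) * (a * (a - 1) + l2 * (1 - l2)) := by positivity
    have h2 : b * l2 * (b - l2) * (a * (a - 1) + l2 * (1 - l2)) <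
        a * l2 * (a - l2) * (b * (b - 1) + l2 * (1 - l2)) := by nlinarith [mul_pos (mul_pos (sub_pos.2 hab) (sub_pos.2 h2u)) (mul_pos (by linarith : (0:ℝ) < a - l2) (by linarith : (0:ℝ) < b - l2)), h2l]
    nlinarith [mul_lt_mul'' h2 h2 h1.le h1.le]
end

section
/- Let A be a symmetric n×n real matrix with I − A invertible, F(x) = Ax + b with fixed point x*, and ΔF(x) = F(x) − x = (A − I)x + b. For e = x − x* ≠ 0 with (A − I)²e ≠ 0, the minimizer α of ‖ΔF(F(x)) + α(ΔF(x) − ΔF(F(x)))‖² over α ∈ ℝ satisfies α = ⟨ê, A(A − I)⁻¹ ê⟩, where ê = (A − I)²e / ‖(A − I)²e‖. -/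
open Matrix

/-- Explicit formula for the Anderson mixing coefficient as the minimizer of
the one-dimensional least-squares problem. -/
theorem aa_mixing_coefficient (n : ℕ) (A : Matrix (Fin n) (Fin n) ℝ)
    (hA : A.IsSymm) (hinv : IsUnit (1 - A))
    (b x xstar : Fin n → ℝ) (hfix : A.mulVec xstar + b = xstar)
    (F ΔF : (Fin n → ℝ) → (Fin n → ℝ))
    (hF : ∀ y, F y = A.mulVec y + b)
    (hΔF : ∀ y, ΔF y = (A - 1).mulVec y + b)
    (he : x - xstar ≠ 0)
    (he2 : ((A - 1) * (A - 1)).mulVec (x - xstar) ≠ 0)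
    (ehat : Fin n → ℝ)
    (hehat : ehat = (Real.sqrt (((A - 1) * (A - 1)).mulVec (x - xstar) ⬝ᵥ
        ((A - 1) * (A - 1)).mulVec (x - xstar)))⁻¹ •
        ((A - 1) * (A - 1)).mulVec (x - xstar))
    (α : ℝ)
    (hmin : ∀ β : ℝ,
      (ΔF (F x) + α • (ΔF x - ΔF (F x))) ⬝ᵥ (ΔF (F x) + α • (ΔF x - ΔF (F x))) ≤
      (ΔF (F x) + β • (ΔF x - ΔF (F x))) ⬝ᵥ (ΔF (F x) + β • (ΔF x - ΔF (F x)))) :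
    α = ehat ⬝ᵥ (A * (A - 1)⁻¹).mulVec ehat := by
  set e := x - xstar with he'
  set w : Fin n → ℝ := ((A - 1) * (A - 1)).mulVec e with hw
  set u : Fin n → ℝ := ((A - 1) * A).mulVec e with hu'
  -- the fixed point kills the constant
  have hAxstar : A.mulVec xstar = xstar - b := eq_sub_of_add_eq hfix
  have h0 : (A - 1).mulVec xstar = -b := by
    rw [Matrix.sub_mulVec, Matrix.one_mulVec, hAxstar]
    abel
  have hΔ : ∀ y, ΔF y = (A - 1).mulVec (y - xstar) := by
    intro y
    rw [hΔF, Matrix.mulVec_sub, h0]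
    abel
  have hFx : F x - xstar = A.mulVec e := by
    rw [hF, Matrix.mulVec_sub, hAxstar]
    abel
  have hu : ΔF (F x) = u := by
    rw [hΔ, hFx, Matrix.mulVec_mulVec]
  have hmm : (A - 1) - (A - 1) * A = -((A - 1) * (A - 1)) := by noncomm_ring
  have hv : ΔF x - ΔF (F x) = -w := by
    rw [hΔ x, hu, ← he', hu', hw, ← Matrix.sub_mulVec, hmm, Matrix.neg_mulVec]
  -- invertibility of A - 1
  have hAU : IsUnit (A - 1) := by simpa [neg_sub] using hinv.neg
  have hdet : IsUnit (A - 1).det := (Matrix.isUnit_iff_isUnit_det _).mp hAU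
  have hinvmul : (A - 1)⁻¹ * (A - 1) = 1 := Matrix.nonsing_inv_mul _ hdet
  have hmat : A * (A - 1)⁻¹ * ((A - 1) * (A - 1)) = (A - 1) * A := by
    calc A * (A - 1)⁻¹ * ((A - 1) * (A - 1))
        = A * ((A - 1)⁻¹ * (A - 1)) * (A - 1) := by
          rw [mul_assoc, mul_assoc, mul_assoc]
      _ = A * (A - 1) := by rw [hinvmul, mul_one]
      _ = (A - 1) * A := by noncomm_ring
  have hMw : (A * (A - 1)⁻¹).mulVec w = u := by
    rw [hw, hu', Matrix.mulVec_mulVec, hmat]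
  -- scalars
  set W : ℝ := w ⬝ᵥ w with hW'
  set P : ℝ := u ⬝ᵥ w with hP'
  have hWpos : 0 < W := by
    have h1 : 0 ≤ W := Finset.sum_nonneg fun i _ => mul_self_nonneg _
    have h2 : W ≠ 0 := by
      intro h
      exact he2 ((dotProduct_self_eq_zero).mp h)
    exact lt_of_le_of_ne h1 (Ne.symm h2)
  have hW0 : W ≠ 0 := ne_of_gt hWpos
  have expand : ∀ β : ℝ, (u + β • (-w)) ⬝ᵥ (u + β • (-w))
      = u ⬝ᵥ u - 2 * β * P + β ^ 2 * W := by
    intro β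
    have hcomm : w ⬝ᵥ u = P := dotProduct_comm w u
    simp only [dotProduct_add, add_dotProduct, smul_dotProduct,
      dotProduct_smul, neg_dotProduct, dotProduct_neg,
      smul_eq_mul, hcomm, ← hP', ← hW']
    ring
  have key : α * W = P := by
    have h := hmin (P / W)
    rw [hv, hu, expand, expand] at h
    have hdiv : P / W * W = P := div_mul_cancel₀ _ hW0
    have hsq : (α * W - P) ^ 2 ≤ 0 := by
      nlinarith [mul_le_mul_of_nonneg_left h hWpos.le, hdiv, hWpos]
    have := sq_nonneg (α * W - P)
    have hz : (α * W - P) ^ 2 = 0 := le_antisymm hsq this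
    have := pow_eq_zero_iff (n := 2) (by norm_num) |>.mp hz
    linarith [sub_eq_zero.mp this]
  -- normalization
  have hs : Real.sqrt W * Real.sqrt W = W := Real.mul_self_sqrt hWpos.le
  have hsne : Real.sqrt W ≠ 0 := by positivity
  rw [hehat, Matrix.mulVec_smul, hMw, smul_dotProduct,
    dotProduct_smul, smul_eq_mul, smul_eq_mul,
    dotProduct_comm w u, ← hP']
  have hval : (Real.sqrt W)⁻¹ * ((Real.sqrt W)⁻¹ * P) = P / W := by
    rw [← hs]; field_simp
    rw [Real.sqrt_sq (Real.sqrt_nonneg _)]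
  rw [hval, eq_div_iff hW0]
  exact key
end

section
/- Let s : ℝ → [0,1] be differentiable and nondecreasing, let φ : ℝⁿ → ℝⁿ be smooth with values componentwise in [0,1] on a set P, and let b : ℝⁿ → ℝⁿ be defined componentwise using a diagonal saturation matrix via b(p) = S(p)·(φ₀ + α² G p_E(p) + (1/N) M p_E(p) + c), where p_E satisfies dp_E/dp = s(p) componentwise, S(p) = diag(s(p_k)), G and M are symmetric positive semidefinite, and α, 1/N ≥ 0. Then the Jacobian of b at any p ∈ P is Db(p) = diag(s'(p_k) φ_k(p)) + α² S(p) G S(p)ᵀ + (1/N) S(p) M S(p)ᵀ, which is symmetric positive semidefinite. -/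
open Matrix

private lemma deriv_nonneg_of_monotone {f : ℝ → ℝ} {f' x : ℝ}
    (hm : Monotone f) (h : HasDerivAt f f' x) : 0 ≤ f' := by
  have ht := hasDerivAt_iff_tendsto_slope.1 h
  refine ge_of_tendsto ht ?_
  filter_upwards [self_mem_nhdsWithin] with y hy
  rcases lt_or_gt_of_ne (hy : y ≠ x) with h1 | h1
  · rw [slope_def_field]
    exact div_nonneg_iff.mpr (Or.inr ⟨by simpa using hm h1.le, by linarith⟩)
  · rw [slope_def_field]
    exact div_nonneg (by simpa using hm h1.le) (by linarith)

private lemma posSemidef_smul {n : ℕ} {A : Matrix (Fin n) (Fin n) ℝ}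
    (hA : A.PosSemidef) {c : ℝ} (hc : 0 ≤ c) : (c • A).PosSemidef := by
  refine ⟨?_, fun x => ?_⟩
  · simpa [Matrix.IsHermitian] using congrArg (c • ·) hA.1.eq
  · exact (hA.smul hc).2 x

/-- Jacobian of the algebraic fluid-content map b(p) = S(p)φ(p) (Eq. (35)):
it is symmetric positive semidefinite. -/
theorem fluid_content_jacobian (n : ℕ) (s s' pE : ℝ → ℝ)
    (hs : ∀ x, HasDerivAt s (s' x) x) (hmono : Monotone s)
    (hsrange : ∀ x, s x ∈ Set.Icc (0:ℝ) 1)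
    (hpE : ∀ x, HasDerivAt pE (s x) x)
    (G M : Matrix (Fin n) (Fin n) ℝ) (hG : G.PosSemidef) (hM : M.PosSemidef)
    (a2 invN : ℝ) (ha2 : 0 ≤ a2) (hinvN : 0 ≤ invN)
    (φ0 c : Fin n → ℝ) (P : Set (Fin n → ℝ))
    (φ : (Fin n → ℝ) → (Fin n → ℝ))
    (hφ : ∀ p, φ p = φ0 + a2 • G.mulVec (fun k => pE (p k)) +
        invN • M.mulVec (fun k => pE (p k)) + c)
    (hφP : ∀ p ∈ P, ∀ k, φ p k ∈ Set.Icc (0:ℝ) 1)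
    (b : (Fin n → ℝ) → (Fin n → ℝ))
    (hb : ∀ p, b p = (Matrix.diagonal (fun k => s (p k))).mulVec (φ p))
    (J : (Fin n → ℝ) → Matrix (Fin n) (Fin n) ℝ)
    (hJ : ∀ p, J p = Matrix.diagonal (fun k => s' (p k) * φ p k) +
        a2 • (Matrix.diagonal (fun k => s (p k)) * G *
          (Matrix.diagonal (fun k => s (p k)))ᵀ) +
        invN • (Matrix.diagonal (fun k => s (p k)) * M *
          (Matrix.diagonal (fun k => s (p k)))ᵀ)) :
    ∀ p ∈ P,
      HasFDerivAt b (LinearMap.toContinuousLinearMap ((J p).mulVecLin)) p ∧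
      (J p).IsSymm ∧ (J p).PosSemidef := by
  intro p hp
  -- Positive semidefiniteness
  have hs' : ∀ x, 0 ≤ s' x := fun x => deriv_nonneg_of_monotone hmono (hs x)
  have hDt : (Matrix.diagonal (fun k => s (p k)))ᵀ
      = (Matrix.diagonal (fun k => s (p k)))ᴴ := by
    rw [conjTranspose_eq_transpose_of_trivial]
  have hpsd : (J p).PosSemidef := by
    rw [hJ p]
    refine ((Matrix.posSemidef_diagonal_iff.mpr fun k =>
        mul_nonneg (hs' _) (hφP p hp k).1).add
      (posSemidef_smul ?_ ha2)).add (posSemidef_smul ?_ hinvN)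
    · rw [hDt]; exact hG.mul_mul_conjTranspose_same _
    · rw [hDt]; exact hM.mul_mul_conjTranspose_same _
  have hsymm : (J p).IsSymm := by
    have := hpsd.isHermitian
    rwa [Matrix.IsHermitian, conjTranspose_eq_transpose_of_trivial] at this
  refine ⟨?_, hsymm, hpsd⟩
  -- Derivative
  apply hasFDerivAt_pi''
  intro k
  have hcomp : ∀ j, HasFDerivAt (fun q : Fin n → ℝ => pE (q j))
      (s (p j) • ContinuousLinearMap.proj j) p :=
    fun j => by exact (hpE (p j)).comp_hasFDerivAt p (hasFDerivAt_apply (𝕜 := ℝ) j p)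
  have hsk : HasFDerivAt (fun q : Fin n → ℝ => s (q k))
      ((s' (p k) • ContinuousLinearMap.proj k : (Fin n → ℝ) →L[ℝ] ℝ)) p :=
    by exact (hs (p k)).comp_hasFDerivAt p (hasFDerivAt_apply (𝕜 := ℝ) k p)
  have hsumG : HasFDerivAt (fun q : Fin n → ℝ => ∑ j, G k j * pE (q j))
      ((∑ j, G k j • (s (p j) • ContinuousLinearMap.proj j) : (Fin n → ℝ) →L[ℝ] ℝ)) p :=
    HasFDerivAt.fun_sum fun j _ => (hcomp j).const_mul (G k j)
  have hsumM : HasFDerivAt (fun q : Fin n → ℝ => ∑ j, M k j * pE (q j))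
      ((∑ j, M k j • (s (p j) • ContinuousLinearMap.proj j) : (Fin n → ℝ) →L[ℝ] ℝ)) p :=
    HasFDerivAt.fun_sum fun j _ => (hcomp j).const_mul (M k j)
  have hφk : HasFDerivAt (fun q : Fin n → ℝ =>
      φ0 k + a2 * (∑ j, G k j * pE (q j)) + invN * (∑ j, M k j * pE (q j)) + c k)
      (((0 + a2 • (∑ j, G k j • (s (p j) • ContinuousLinearMap.proj j))
          + invN • (∑ j, M k j • (s (p j) • ContinuousLinearMap.proj j))) + 0
        : (Fin n → ℝ) →L[ℝ] ℝ)) p := by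
    exact (((hasFDerivAt_const (φ0 k) p).add (hsumG.const_mul a2)).add
      (hsumM.const_mul invN)).add (hasFDerivAt_const (c k) p)
  have hprod := hsk.mul hφk
  have hfun : (fun q : Fin n → ℝ => b q k) = fun q : Fin n → ℝ =>
      s (q k) * (φ0 k + a2 * (∑ j, G k j * pE (q j))
        + invN * (∑ j, M k j * pE (q j)) + c k) := by
    funext q
    rw [hb]
    simp only [Matrix.mulVec_diagonal]
    rw [hφ]
    simp [Matrix.mulVec, dotProduct]
  have hval : φ0 k + a2 * (∑ j, G k j * pE (p j))
      + invN * (∑ j, M k j * pE (p j)) + c k = φ p k := by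
    rw [hφ]
    simp [Matrix.mulVec, dotProduct]
  rw [hval] at hprod
  rw [hfun]
  refine hprod.congr_fderiv ?_
  ext v
  simp only [ContinuousLinearMap.coe_comp', Function.comp_apply,
    ContinuousLinearMap.proj_apply, ContinuousLinearMap.add_apply,
    ContinuousLinearMap.smul_apply, ContinuousLinearMap.zero_apply,
    ContinuousLinearMap.coe_sum', Finset.sum_apply, smul_eq_mul,
    LinearMap.coe_toContinuousLinearMap', Matrix.mulVecLin_apply]
  rw [hJ]
  simp only [Matrix.mulVec, dotProduct]
  simp only [Matrix.add_apply, Matrix.smul_apply, Matrix.diagonal_transpose,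
    Matrix.mul_diagonal, Matrix.diagonal_mul, Matrix.diagonal_apply, smul_eq_mul,
    add_mul, ite_mul, zero_mul, Finset.sum_add_distrib, Finset.sum_ite_eq,
    Finset.mem_univ, if_true, mul_add, mul_zero, add_zero, zero_add, Finset.mul_sum]
  have e1 : ∀ (A : Matrix (Fin n) (Fin n) ℝ) (t : ℝ),
      ∑ x, s (p k) * (t * (A k x * (s (p x) * v x)))
        = ∑ x, t * (s (p k) * A k x * s (p x)) * v x :=
    fun A t => Finset.sum_congr rfl (fun x _ => by ring)
  rw [e1 G a2, e1 M invN]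
  ring
end

section
/- Let 0 < λ₂ < λ₁ < 1. Then r(λ₁,λ₂) = λ₁²λ₂²(λ₁−λ₂)² / (λ₁(1−λ₁) + λ₂(1−λ₂))² satisfies r(λ₁,λ₂) < λ₁⁴, i.e., restarted Anderson acceleration AA*(1) strictly improves on four steps of the plain Richardson iteration when both eigenvalues lie in (0,1). -/
/-- AA*(1) strictly improves on four plain Richardson steps when both
eigenvalues lie in (0,1). -/
theorem aa_improves_positive_contractive (l1 l2 : ℝ)
    (h2 : 0 < l2) (h12 : l2 < l1) (h1 : l1 < 1) :
    l1^2 * l2^2 * (l1 - l2)^2 / (l1 * (1 - l1) + l2 * (1 - l2))^2 < l1^4 := by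
  have hD : 0 < l1 * (1 - l1) + l2 * (1 - l2) := by nlinarith
  rw [div_lt_iff₀ (by positivity)]
  have hkey : l2 * (l1 - l2) < l1 * (l1 * (1 - l1) + l2 * (1 - l2)) := by
    nlinarith [mul_pos (by linarith : (0:ℝ) < 1 - l1) (by positivity : (0:ℝ) < l1^2 + l2^2)]
  have ha : 0 ≤ l2 * (l1 - l2) := by nlinarith
  have hsq : (l2 * (l1 - l2))^2 < (l1 * (l1 * (1 - l1) + l2 * (1 - l2)))^2 := by
    nlinarith [hkey, ha]
  nlinarith [mul_lt_mul_of_pos_left hsq (pow_pos (h2.trans h12) 2)]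
end
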